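/- Let σ > 0 and for each k ∈ ℤ define d_{L,k}(σ) = ((−1)^k sinh(σπ)/(σπ²)) · ∫₀^π cos(kt)/cosh(σt) dt. Then for every t ∈ [0, 2π], ∑_{k∈ℤ} d_{L,k}(σ) e^{−ikt} = sinh(σπ)/(σπ·cosh(σ(t − π))); that is, the d_{L,k}(σ) are exactly the Fourier coefficients of the reciprocal of the mask Φ_L(t, σ) = σπ·cosh(σ(t − π))/sinh(σπ). -/

import Mathlib

open Real MeasureTheory intervalIntegral

noncomputable def dL (σ : ℝ) (k : ℤ) : ℝ :=
  ((-1 : ℝ) ^ k * Real.sinh (σ * π) / (σ * π ^ 2)) *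
    ∫ t in (0 : ℝ)..π, Real.cos (k * t) / Real.cosh (σ * t)


lemma integral_even_aux {f : ℝ → ℝ} (hf : ∀ x, f (-x) = f x) (hc : Continuous f) (a : ℝ) :
    ∫ x in (-a)..a, f x = 2 * ∫ x in (0:ℝ)..a, f x := by
  have h1 : ∫ x in (-a)..(0:ℝ), f x = ∫ x in (0:ℝ)..a, f x := by
    have := intervalIntegral.integral_comp_neg (a := 0) (b := a) f
    simp only [neg_zero] at this
    rw [← this]
    simp [hf]
  rw [← intervalIntegral.integral_add_adjacent_intervals
    (hc.intervalIntegrable (-a) 0) (hc.intervalIntegrable 0 a), h1]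
  ring

lemma integral_odd_aux {f : ℝ → ℝ} (hf : ∀ x, f (-x) = - f x) (hc : Continuous f) (a : ℝ) :
    ∫ x in (-a)..a, f x = 0 := by
  have h1 : ∫ x in (-a)..(0:ℝ), f x = - ∫ x in (0:ℝ)..a, f x := by
    have := intervalIntegral.integral_comp_neg (a := 0) (b := a) f
    simp only [neg_zero] at this
    rw [← this]
    simp [hf, intervalIntegral.integral_neg]
  rw [← intervalIntegral.integral_add_adjacent_intervals
    (hc.intervalIntegrable (-a) 0) (hc.intervalIntegrable 0 a), h1]
  ring

lemma hcont_h (σ : ℝ) (hσ : 0 < σ) :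
    Continuous (fun u : ℝ => Real.sinh (σ*π) / (σ*π*Real.cosh (σ*u))) := by
  apply continuous_const.div
  · fun_prop
  · intro u
    have := Real.cosh_pos (σ*u)
    positivity

section derivs
variable (σ : ℝ)

noncomputable def f0 (t : ℝ) : ℝ := Real.sinh (σ*π) / (σ*π*Real.cosh (σ*(t-π)))
noncomputable def f1 (t : ℝ) : ℝ :=
  -(Real.sinh (σ*π)/(σ*π)) * σ * Real.sinh (σ*(t-π)) / Real.cosh (σ*(t-π))^2
noncomputable def f2 (t : ℝ) : ℝ :=
  -(Real.sinh (σ*π)/(σ*π)) * σ^2 * (Real.cosh (σ*(t-π))^2 - 2*Real.sinh (σ*(t-π))^2)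
    / Real.cosh (σ*(t-π))^3

variable {σ} (hσ : 0 < σ)
include hσ

lemma hasDeriv_f0 (t : ℝ) : HasDerivAt (f0 σ) (f1 σ t) t := by
  have hlin : HasDerivAt (fun t:ℝ => σ*(t-π)) σ t := by
    simpa using ((hasDerivAt_id t).sub_const π).const_mul σ
  have hcosh : HasDerivAt (fun t => σ*π*Real.cosh (σ*(t-π)))
      (σ*π*(σ * Real.sinh (σ*(t-π)))) t := by
    exact (((Real.hasDerivAt_cosh _).comp t hlin).const_mul (σ*π)).congr_deriv (by ring)
  have hC := Real.cosh_pos (σ*(t-π))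
  have hD : σ*π*Real.cosh (σ*(t-π)) ≠ 0 := by positivity
  have := (hasDerivAt_const t (Real.sinh (σ*π))).div hcosh hD
  refine HasDerivAt.congr_deriv this ?_
  unfold f1
  have hπ := Real.pi_ne_zero
  field_simp
  ring

lemma hasDeriv_f1 (t : ℝ) : HasDerivAt (f1 σ) (f2 σ t) t := by
  have hlin : HasDerivAt (fun t:ℝ => σ*(t-π)) σ t := by
    simpa using ((hasDerivAt_id t).sub_const π).const_mul σ
  have hsinh : HasDerivAt (fun t => -(Real.sinh (σ*π)/(σ*π)) * σ * Real.sinh (σ*(t-π)))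
      (-(Real.sinh (σ*π)/(σ*π)) * σ * (σ * Real.cosh (σ*(t-π)))) t := by
    exact (((Real.hasDerivAt_sinh _).comp t hlin).const_mul _).congr_deriv (by ring)
  have hcosh2 : HasDerivAt (fun t => Real.cosh (σ*(t-π))^2)
      (2*Real.cosh (σ*(t-π)) * (σ * Real.sinh (σ*(t-π)))) t := by
    have := (((Real.hasDerivAt_cosh _).comp t hlin).pow 2)
    exact this.congr_deriv (by simp only [Function.comp_apply]; push_cast; ring)
  have hC := Real.cosh_pos (σ*(t-π))
  have hD : Real.cosh (σ*(t-π))^2 ≠ 0 := by positivity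
  have := hsinh.div hcosh2 hD
  refine HasDerivAt.congr_deriv this ?_
  unfold f2
  have hπ := Real.pi_ne_zero
  field_simp
  ring

lemma abs_f1_le (t : ℝ) : |f1 σ t| ≤ Real.sinh (σ*π)/π := by
  unfold f1
  have hC := Real.cosh_pos (σ*(t-π))
  have h1 : (1:ℝ) ≤ Real.cosh (σ*(t-π)) := Real.one_le_cosh _
  have hs : |Real.sinh (σ*(t-π))| ≤ Real.cosh (σ*(t-π)) := by
    rw [Real.abs_sinh, ← Real.cosh_abs]
    exact (Real.sinh_lt_cosh _).le
  have hA : 0 < Real.sinh (σ*π) := by positivity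
  have hπ := Real.pi_pos
  rw [abs_div, abs_mul, abs_mul, abs_neg, abs_div, abs_of_pos hA,
    abs_of_pos (by positivity : (0:ℝ) < σ*π),
    abs_of_pos hσ, abs_of_pos (by positivity : (0:ℝ) < Real.cosh (σ*(t-π))^2)]
  have key : |Real.sinh (σ*(t-π))| / Real.cosh (σ*(t-π))^2 ≤ 1 := by
    rw [div_le_one (by positivity)]
    nlinarith
  calc Real.sinh (σ*π)/(σ*π) * σ * |Real.sinh (σ*(t-π))| / Real.cosh (σ*(t-π))^2
      = (Real.sinh (σ*π)/π) * (|Real.sinh (σ*(t-π))| / Real.cosh (σ*(t-π))^2) := by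
        field_simp
    _ ≤ (Real.sinh (σ*π)/π) * 1 := mul_le_mul_of_nonneg_left key (by positivity)
    _ = Real.sinh (σ*π)/π := mul_one _

lemma abs_f2_le (t : ℝ) : |f2 σ t| ≤ 3*σ*Real.sinh (σ*π)/π := by
  unfold f2
  have hC := Real.cosh_pos (σ*(t-π))
  have h1 : (1:ℝ) ≤ Real.cosh (σ*(t-π)) := Real.one_le_cosh _
  have hs : |Real.sinh (σ*(t-π))| ≤ Real.cosh (σ*(t-π)) := by
    rw [Real.abs_sinh, ← Real.cosh_abs]
    exact (Real.sinh_lt_cosh _).le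
  have hs2 : Real.sinh (σ*(t-π))^2 ≤ Real.cosh (σ*(t-π))^2 := by
    nlinarith [abs_nonneg (Real.sinh (σ*(t-π))), sq_abs (Real.sinh (σ*(t-π)))]
  have hA : 0 < Real.sinh (σ*π) := by positivity
  have hπ := Real.pi_pos
  rw [abs_div, abs_mul, abs_mul, abs_neg, abs_div, abs_of_pos hA,
    abs_of_pos (by positivity : (0:ℝ) < σ*π),
    abs_of_pos (by positivity : (0:ℝ) < σ^2),
    abs_of_pos (by positivity : (0:ℝ) < Real.cosh (σ*(t-π))^3)]
  have key : |Real.cosh (σ*(t-π))^2 - 2*Real.sinh (σ*(t-π))^2| / Real.cosh (σ*(t-π))^3 ≤ 3 := by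
    rw [div_le_iff₀ (by positivity), abs_le]
    constructor <;> nlinarith
  calc Real.sinh (σ*π)/(σ*π) * σ^2 * |Real.cosh (σ*(t-π))^2 - 2*Real.sinh (σ*(t-π))^2|
        / Real.cosh (σ*(t-π))^3
      = (σ*Real.sinh (σ*π)/π) * (|Real.cosh (σ*(t-π))^2 - 2*Real.sinh (σ*(t-π))^2|
        / Real.cosh (σ*(t-π))^3) := by field_simp
    _ ≤ (σ*Real.sinh (σ*π)/π) * 3 := mul_le_mul_of_nonneg_left key (by positivity)
    _ = 3*σ*Real.sinh (σ*π)/π := by ring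

lemma cont_f1 : Continuous (f1 σ) := by
  unfold f1
  apply Continuous.div (by fun_prop) (by fun_prop)
  intro t
  have := Real.cosh_pos (σ*(t-π))
  positivity

lemma cont_f2 : Continuous (f2 σ) := by
  unfold f2
  apply Continuous.div (by fun_prop) (by fun_prop)
  intro t
  have := Real.cosh_pos (σ*(t-π))
  positivity
end derivs

lemma norm_coeff_le (σ : ℝ) (hσ : 0 < σ) (n : ℤ) (hn : n ≠ 0) :
    ‖fourierCoeffOn Real.two_pi_pos (fun t => ((f0 σ t : ℝ) : ℂ)) n‖ ≤
      ((2*(Real.sinh (σ*π)/π) + 2*π*(3*σ*Real.sinh (σ*π)/π))/(2*π)) / (n:ℝ)^2 := by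
  haveI : Fact (0 < 2*π) := ⟨Real.two_pi_pos⟩
  have hπ := Real.pi_pos
  -- norm of the scalar 1/(-2πIn)
  have hnorm1 : ‖(1:ℂ) / (-2 * (π:ℂ) * Complex.I * (n:ℂ))‖ = 1/(2*π*|(n:ℝ)|) := by
    simp [norm_div, norm_mul, abs_of_pos Real.pi_pos, Complex.norm_I]
  set A1 : ℝ := Real.sinh (σ*π)/π with hA1
  set A2 : ℝ := 3*σ*Real.sinh (σ*π)/π with hA2
  have hA1p : 0 < A1 := by rw [hA1]; positivity
  have hA2p : 0 < A2 := by rw [hA2]; positivity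
  have hfn : ∀ (m:ℤ) (x:ℝ), ‖fourier m (x : AddCircle (2*π-0))‖ = 1 := by
    intro m x
    rw [fourier_apply]
    exact Circle.norm_coe _
  -- bound on second-derivative coefficient
  have he : ∀ m : ℤ, ‖fourierCoeffOn Real.two_pi_pos (fun t => ((f2 σ t : ℝ):ℂ)) m‖ ≤ A2 := by
    intro m
    rw [fourierCoeffOn_eq_integral]
    rw [norm_smul]
    have hb : ‖∫ x in (0:ℝ)..2*π, fourier (-m) (x : AddCircle (2*π-0)) • ((f2 σ x : ℝ):ℂ)‖
        ≤ A2 * |2*π - 0| := by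
      apply intervalIntegral.norm_integral_le_of_norm_le_const
      intro x _
      rw [norm_smul, hfn, one_mul, Complex.norm_real, Real.norm_eq_abs]
      exact abs_f2_le hσ x
    calc ‖(1:ℝ)/(2*π-0)‖ * ‖∫ x in (0:ℝ)..2*π, fourier (-m) (x : AddCircle (2*π-0)) • ((f2 σ x : ℝ):ℂ)‖
        ≤ ‖(1:ℝ)/(2*π-0)‖ * (A2 * |2*π - 0|) := by
          exact mul_le_mul_of_nonneg_left hb (norm_nonneg _)
      _ = A2 := by
          rw [Real.norm_eq_abs, abs_div, abs_one, abs_of_pos (by simpa using Real.two_pi_pos : (0:ℝ) < 2*π - 0)]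
          field_simp
  -- first derivative step
  have hd1 : ∀ x ∈ Set.uIcc (0:ℝ) (2*π),
      HasDerivAt (fun t => ((f1 σ t : ℝ):ℂ)) ((f2 σ x : ℝ):ℂ) x :=
    fun x _ => (hasDeriv_f1 hσ x).ofReal_comp
  have int2 : IntervalIntegrable (fun x => ((f2 σ x : ℝ):ℂ)) MeasureTheory.volume 0 (2*π) :=
    (Complex.continuous_ofReal.comp (cont_f2 hσ)).intervalIntegrable _ _
  have step2 := fourierCoeffOn_of_hasDerivAt Real.two_pi_pos hn hd1 int2
  simp only [Complex.ofReal_zero, sub_zero] at step2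
  have hd0 : ∀ x ∈ Set.uIcc (0:ℝ) (2*π),
      HasDerivAt (fun t => ((f0 σ t : ℝ):ℂ)) ((f1 σ x : ℝ):ℂ) x :=
    fun x _ => (hasDeriv_f0 hσ x).ofReal_comp
  have int1 : IntervalIntegrable (fun x => ((f1 σ x : ℝ):ℂ)) MeasureTheory.volume 0 (2*π) :=
    (Complex.continuous_ofReal.comp (cont_f1 hσ)).intervalIntegrable _ _
  have step1 := fourierCoeffOn_of_hasDerivAt Real.two_pi_pos hn hd0 int1
  simp only [Complex.ofReal_zero, sub_zero] at step1
  have hper : ((f0 σ (2*π) : ℝ):ℂ) - ((f0 σ 0 : ℝ):ℂ) = 0 := by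
    unfold f0
    rw [show σ*(0-π) = -(σ*π) by ring, show σ*(2*π-π) = σ*π by ring, Real.cosh_neg, sub_self]
  -- bound on first-derivative coefficient
  have hd : ‖fourierCoeffOn Real.two_pi_pos (fun t => ((f1 σ t : ℝ):ℂ)) n‖
      ≤ (1/(2*π*|(n:ℝ)|)) * (2*A1 + 2*π*A2) := by
    rw [step2, norm_mul, hnorm1]
    apply mul_le_mul_of_nonneg_left _ (by positivity)
    calc ‖fourier (-n) ((0:ℝ) : AddCircle (2*π-0)) * (((f1 σ (2*π) : ℝ):ℂ) - ((f1 σ 0 : ℝ):ℂ))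
          - (((2*π : ℝ)):ℂ) * fourierCoeffOn Real.two_pi_pos (fun t => ((f2 σ t : ℝ):ℂ)) n‖
        ≤ ‖fourier (-n) ((0:ℝ) : AddCircle (2*π-0)) * (((f1 σ (2*π) : ℝ):ℂ) - ((f1 σ 0 : ℝ):ℂ))‖
          + ‖(((2*π : ℝ)):ℂ) * fourierCoeffOn Real.two_pi_pos (fun t => ((f2 σ t : ℝ):ℂ)) n‖ :=
          norm_sub_le _ _
      _ ≤ 2*A1 + 2*π*A2 := by
          apply add_le_add
          · rw [norm_mul, hfn, one_mul]
            calc ‖(((f1 σ (2*π) : ℝ):ℂ) - ((f1 σ 0 : ℝ):ℂ))‖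
                ≤ ‖((f1 σ (2*π) : ℝ):ℂ)‖ + ‖((f1 σ 0 : ℝ):ℂ)‖ := norm_sub_le _ _
              _ ≤ A1 + A1 := by
                  apply add_le_add <;>
                    · rw [Complex.norm_real, Real.norm_eq_abs]; exact abs_f1_le hσ _
              _ = 2*A1 := by ring
          · rw [norm_mul]
            calc ‖(((2*π : ℝ)):ℂ)‖ * ‖fourierCoeffOn Real.two_pi_pos (fun t => ((f2 σ t : ℝ):ℂ)) n‖
                ≤ (2*π) * A2 := by
                  apply mul_le_mul _ (he n) (norm_nonneg _) (by positivity)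
                  rw [Complex.norm_real, Real.norm_eq_abs, abs_of_pos (by positivity : (0:ℝ) < 2*π)]
              _ = 2*π*A2 := by ring
  -- final bound
  have hne : |(n:ℝ)| ≠ 0 := by
    simp only [ne_eq, abs_eq_zero, Int.cast_eq_zero]
    exact hn
  have hnpos : 0 < |(n:ℝ)| := lt_of_le_of_ne (abs_nonneg _) (Ne.symm hne)
  rw [step1, hper, mul_zero, zero_sub, norm_mul, hnorm1, norm_neg, norm_mul]
  calc 1/(2*π*|(n:ℝ)|) * (‖(((2*π:ℝ)):ℂ)‖
        * ‖fourierCoeffOn Real.two_pi_pos (fun t => ((f1 σ t : ℝ):ℂ)) n‖)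
      ≤ 1/(2*π*|(n:ℝ)|) * ((2*π) * ((1/(2*π*|(n:ℝ)|)) * (2*A1 + 2*π*A2))) := by
        apply mul_le_mul_of_nonneg_left _ (by positivity)
        apply mul_le_mul _ hd (norm_nonneg _) (by positivity)
        rw [Complex.norm_real, Real.norm_eq_abs, abs_of_pos (by positivity : (0:ℝ) < 2*π)]
    _ = ((2*A1 + 2*π*A2)/(2*π)) / (n:ℝ)^2 := by
        have harith : ∀ x S : ℝ, 0 < x → 1/(2*π*x) * (2*π*(1/(2*π*x)*S)) = S/(2*π)/x^2 := by
          intro x S hx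
          field_simp
        rw [harith _ _ hnpos, sq_abs]


lemma coeff_eq (σ : ℝ) (hσ : 0 < σ) (n : ℤ) :
    fourierCoeffOn Real.two_pi_pos
      (fun t => ((f0 σ t : ℝ) : ℂ)) n = (dL σ n : ℂ) := by
  unfold f0
  have hπ : (π:ℂ) ≠ 0 := by exact_mod_cast Real.pi_ne_zero
  set h : ℝ → ℝ := fun u => Real.sinh (σ*π) / (σ*π*Real.cosh (σ*u)) with hh
  have hch : Continuous h := hcont_h σ hσ
  have hfour : ∀ x:ℝ, (fourier (-n) (x : AddCircle (2*π-0)) : ℂ)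
      = Complex.exp (-Complex.I*n*x) := by
    intro x
    rw [fourier_coe_apply]
    congr 1
    push_cast
    field_simp
    ring
  rw [fourierCoeffOn_eq_integral]
  simp_rw [hfour, smul_eq_mul]
  have hsub : (∫ x in (0:ℝ)..2*π, Complex.exp (-Complex.I*n*x)
        * ((Real.sinh (σ*π) / (σ*π*Real.cosh (σ*(x-π))) : ℝ):ℂ))
      = ∫ u in (-π)..π, Complex.exp (-Complex.I*n*(u+π)) * ((h u:ℝ):ℂ) := by
    have := intervalIntegral.integral_comp_add_right (a := -π) (b := π)
      (fun x => Complex.exp (-Complex.I*n*x)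
        * ((Real.sinh (σ*π) / (σ*π*Real.cosh (σ*(x-π))) : ℝ):ℂ)) π
    rw [show (-π + π : ℝ) = 0 by ring, show (π + π : ℝ) = 2*π by ring] at this
    rw [← this]
    congr 1
    funext u
    simp [hh]
  rw [hsub]
  have hexp : Complex.exp (-Complex.I*n*π) = (-1:ℂ)^n := by
    have h1 : -Complex.I*(n:ℂ)*(π:ℂ) = (-n : ℤ) * ((π:ℂ) * Complex.I) := by push_cast; ring
    rw [h1, Complex.exp_int_mul, Complex.exp_pi_mul_I, zpow_neg, ← inv_zpow, inv_neg, inv_one]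
  have hsplit : ∀ u:ℝ, Complex.exp (-Complex.I*n*(u+π)) * ((h u:ℝ):ℂ)
      = (-1:ℂ)^n * (Complex.exp (-Complex.I*n*u) * ((h u:ℝ):ℂ)) := by
    intro u
    rw [← hexp, ← mul_assoc, ← Complex.exp_add]
    congr 2
    push_cast
    ring
  simp_rw [hsplit]
  rw [intervalIntegral.integral_const_mul]
  have hint : ∀ u : ℝ, Complex.exp (-Complex.I*n*u) * ((h u:ℝ):ℂ)
      = ((Real.cos (n*u) * h u :ℝ):ℂ) - Complex.I * ((Real.sin (n*u) * h u :ℝ):ℂ) := by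
    intro u
    have h2 : -Complex.I*(n:ℂ)*(u:ℂ) = ((-((n:ℝ)*u) : ℝ):ℂ) * Complex.I := by push_cast; ring
    rw [h2, Complex.exp_mul_I]
    push_cast
    simp [Real.cos_neg, Real.sin_neg]
    ring
  simp_rw [hint]
  have hc1 : Continuous fun u:ℝ => ((Real.cos (n*u) * h u :ℝ):ℂ) :=
    Complex.continuous_ofReal.comp (by fun_prop)
  have hc2 : Continuous fun u:ℝ => Complex.I * ((Real.sin (n*u) * h u :ℝ):ℂ) :=
    continuous_const.mul (Complex.continuous_ofReal.comp (by fun_prop))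
  rw [intervalIntegral.integral_sub (hc1.intervalIntegrable _ _) (hc2.intervalIntegrable _ _),
    intervalIntegral.integral_const_mul, intervalIntegral.integral_ofReal,
    intervalIntegral.integral_ofReal]
  rw [integral_odd_aux (f := fun u => Real.sin (n*u) * h u) ?_ (by fun_prop) π,
    integral_even_aux (f := fun u => Real.cos (n*u) * h u) ?_ (by fun_prop) π]
  · -- final arithmetic
    have hconst : (∫ u in (0:ℝ)..π, Real.cos (n*u) * h u)
        = (Real.sinh (σ*π)/(σ*π)) * ∫ u in (0:ℝ)..π, Real.cos (n*u) / Real.cosh (σ*u) := by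
      rw [← intervalIntegral.integral_const_mul]
      apply intervalIntegral.integral_congr
      intro x _
      have hc := Real.cosh_pos (σ*x)
      simp only [hh]
      field_simp
    rw [hconst, dL]
    generalize (∫ u in (0:ℝ)..π, Real.cos (n*u) / Real.cosh (σ*u)) = I
    have hπ' : π ≠ 0 := Real.pi_ne_zero
    push_cast [Complex.ofReal_zpow, Complex.real_smul]
    field_simp
    ring
  · intro x
    simp only [hh, mul_neg, Real.sin_neg, Real.cos_neg, Real.cosh_neg, neg_mul]
  · intro x
    simp only [hh, mul_neg, Real.sin_neg, Real.cos_neg, Real.cosh_neg, neg_mul]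



lemma cont_f0 {σ : ℝ} (hσ : 0 < σ) : Continuous (f0 σ) := by
  unfold f0
  apply continuous_const.div (by fun_prop)
  intro u
  have := Real.cosh_pos (σ*(u-π))
  positivity

lemma dL_neg (σ : ℝ) (n : ℤ) : dL σ (-n) = dL σ n := by
  unfold dL
  rw [zpow_neg, ← inv_zpow, inv_neg, inv_one]
  congr 1
  apply intervalIntegral.integral_congr
  intro x _
  push_cast
  rw [neg_mul, Real.cos_neg]

lemma summable_coeffs (σ : ℝ) (hσ : 0 < σ) :
    Summable (fun n : ℤ => fourierCoeffOn Real.two_pi_pos (fun t => ((f0 σ t : ℝ):ℂ)) n) := by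
  set C : ℝ := ((2*(Real.sinh (σ*π)/π) + 2*π*(3*σ*Real.sinh (σ*π)/π))/(2*π)) with hC
  have hbase : Summable (fun n : ℤ => C * (1/(n:ℝ)^2)) :=
    (summable_one_div_int_pow.2 one_lt_two).mul_left C
  apply Summable.of_norm_bounded_eventually hbase
  rw [Filter.eventually_cofinite]
  apply Set.Finite.subset (Set.finite_singleton (0:ℤ))
  intro n hn
  simp only [Set.mem_setOf_eq, not_le] at hn
  simp only [Set.mem_singleton_iff]
  by_contra h0
  rw [mul_one_div] at hn
  exact absurd (norm_coeff_le σ hσ n h0) (not_le.2 hn)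

theorem lorentz_nod_mask (σ : ℝ) (hσ : 0 < σ) :
    ∀ t ∈ Set.Icc (0 : ℝ) (2 * π),
      (∑' k : ℤ, (dL σ k : ℂ) * Complex.exp (-Complex.I * (k : ℂ) * (t : ℂ))) =
        ((Real.sinh (σ * π) / (σ * π * Real.cosh (σ * (t - π))) : ℝ) : ℂ) := by
  intro t ht
  haveI : Fact (0 < 2*π) := ⟨Real.two_pi_pos⟩
  set g : ℝ → ℂ := fun s => ((f0 σ s : ℝ):ℂ) with hg
  have hgc : ContinuousOn g (Set.Icc 0 (0 + 2*π)) :=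
    (Complex.continuous_ofReal.comp (cont_f0 hσ)).continuousOn
  have hperR : f0 σ 0 = f0 σ (0 + 2*π) := by
    unfold f0
    rw [show σ*(0-π) = -(σ*π) by ring, show σ*(0+2*π-π) = σ*π by ring, Real.cosh_neg]
  have hper : g 0 = g (0 + 2*π) := by
    rw [hg]
    exact congrArg (fun r : ℝ => (r:ℂ)) hperR
  set F : C(AddCircle (2*π), ℂ) :=
    ⟨AddCircle.liftIco (2*π) 0 g, AddCircle.liftIco_continuous hper hgc⟩ with hF
  have hcoeF : ∀ n : ℤ, fourierCoeff (⇑F) n = fourierCoeffOn Real.two_pi_pos g n := by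
    intro n
    have h1 : fourierCoeff (⇑F) n = fourierCoeff (AddCircle.liftIco (2*π) 0 g) n := rfl
    rw [h1, fourierCoeff_liftIco_eq]
    congr 1
    exact zero_add _
  have hsum : Summable (fourierCoeff (⇑F)) :=
    (summable_coeffs σ hσ).congr (fun n => (hcoeF n).symm)
  have hHasSum := has_pointwise_sum_fourier_series_of_summable hsum ((t:ℝ) : AddCircle (2*π))
  have h0mem : (0:ℝ) ∈ Set.Ico (0:ℝ) (0 + 2*π) :=
    ⟨le_refl 0, by rw [zero_add]; exact Real.two_pi_pos⟩
  have hFt : F ((t:ℝ) : AddCircle (2*π)) = g t := by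
    rcases eq_or_lt_of_le ht.2 with h2π | h2π
    · have ht0 : ((t:ℝ) : AddCircle (2*π)) = (((0:ℝ)) : AddCircle (2*π)) := by
        rw [h2π]
        exact AddCircle.coe_period (2*π)
      rw [ht0]
      have hF0 : F (((0:ℝ)) : AddCircle (2*π)) = g 0 := AddCircle.liftIco_coe_apply (f := g) h0mem
      rw [hF0, hper, zero_add, ← h2π]
    · have hmem : t ∈ Set.Ico (0:ℝ) (0 + 2*π) := ⟨ht.1, by rw [zero_add]; exact h2π⟩
      exact AddCircle.liftIco_coe_apply (f := g) hmem
  have hfour2 : ∀ n : ℤ, fourier n ((t:ℝ) : AddCircle (2*π)) = Complex.exp (Complex.I * n * t) := by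
    intro n
    rw [fourier_coe_apply]
    congr 1
    have hπ : (π:ℂ) ≠ 0 := by exact_mod_cast Real.pi_ne_zero
    push_cast
    field_simp
  rw [hFt] at hHasSum
  have hHasSum' : HasSum (fun n : ℤ => (dL σ n : ℂ) * Complex.exp (Complex.I * n * t)) (g t) := by
    convert hHasSum using 2 with n
    rw [hcoeF n, hg, coeff_eq σ hσ n, hfour2 n, smul_eq_mul]
  have hfinal : HasSum
      (fun k : ℤ => (dL σ k : ℂ) * Complex.exp (-Complex.I * (k:ℂ) * (t:ℂ))) (g t) := by
    have hneg := (Equiv.neg ℤ).hasSum_iff.mpr hHasSum'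
    convert hneg using 2 with k
    simp only [Function.comp_apply, Equiv.neg_apply]
    rw [dL_neg]
    congr 1
    push_cast
    ring_nf
  exact hfinal.tsum_eq
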